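/- Let n ≥ 2 be an integer, α ∈ [0,n), and let Ω ⊂ ℝⁿ be a bounded measurable set with diameter D₀ > 0. Let h, k : ℝⁿ → [0,∞) be integrable functions vanishing almost everywhere outside Ω and satisfying ∫_Ω h dx ≤ C₀ ∫_Ω k dx for some constant C₀ > 0. Let λ₁ > 0 and suppose that some z₁ ∈ Ω satisfies M_α k(z₁) ≤ λ₁. Then for every R > 0 there exists a constant C > 0, depending only on n, α, C₀ and the ratio D₀/R, such that for every λ₂ > 0, L^n({ζ ∈ Ω : M_α h(ζ) > λ₂}) ≤ C · (λ₁/λ₂)^{n/(n−α)} · L^n(B_R(0)). (In the paper this is applied with h = |∇u|^p and k = |F|^p + |f|^{p/(p−1)} + |∇g|^p.) -/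

import Mathlib

open MeasureTheory ENNReal Metric Set

/-- The fractional maximal function `M_α h (x) = sup_{ρ>0} ρ^α ⨍_{B_ρ(x)} |h|`,
valued in `ℝ≥0∞`. -/
noncomputable def fracMax (n : ℕ) (α : ℝ) (h : EuclideanSpace ℝ (Fin n) → ℝ)
    (x : EuclideanSpace ℝ (Fin n)) : ℝ≥0∞ :=
  ⨆ (ρ : ℝ) (_ : 0 < ρ),
    ENNReal.ofReal (ρ ^ α) * ⨍⁻ y in Metric.ball x ρ, ENNReal.ofReal |h y| ∂volume

variable {n : ℕ}

/-- Abstract Vitali-covering weak type estimate. -/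
lemma weak_covering_est (f : EuclideanSpace ℝ (Fin n) → ℝ≥0∞)
    (S : Set (EuclideanSpace ℝ (Fin n))) (r₀ : ℝ) (t : ℝ≥0∞) (ht0 : t ≠ 0) (httop : t ≠ ⊤)
    (hS : ∀ ζ ∈ S, ∃ ρ : ℝ, 0 < ρ ∧ ρ ≤ r₀ ∧
        t * volume (ball ζ ρ) ≤ ∫⁻ y in ball ζ ρ, f y ∂volume) :
    volume S ≤ ENNReal.ofReal (4 ^ n) * (∫⁻ y, f y ∂volume) / t := by
  classical
  -- choose radii
  have hch : ∀ ζ : EuclideanSpace ℝ (Fin n), ∃ ρ : ℝ, ζ ∈ S → (0 < ρ ∧ ρ ≤ r₀ ∧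
      t * volume (ball ζ ρ) ≤ ∫⁻ y in ball ζ ρ, f y ∂volume) := by
    intro ζ
    by_cases hζ : ζ ∈ S
    · obtain ⟨ρ, hρ⟩ := hS ζ hζ; exact ⟨ρ, fun _ => hρ⟩
    · exact ⟨1, fun hc => absurd hc hζ⟩
  choose r hr using hch
  obtain ⟨u, huS, hdisj, hcov⟩ :=
    Vitali.exists_disjoint_subfamily_covering_enlargement_closedBall S id r r₀
      (fun a ha => (hr a ha).2.1) 4 (by norm_num)
  simp only [id] at hdisj hcov
  have hrpos : ∀ a ∈ u, 0 < r a := fun a ha => (hr a (huS ha)).1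
  have hucount : u.Countable :=
    hdisj.countable_of_nonempty_interior fun a ha => by
      rw [interior_closedBall _ (hrpos a ha).ne']
      exact ⟨a, mem_ball_self (hrpos a ha)⟩
  have hScov : S ⊆ ⋃ b ∈ u, closedBall b (4 * r b) := by
    intro a ha
    obtain ⟨b, hb, hsub⟩ := hcov a ha
    exact mem_biUnion hb (hsub (mem_closedBall_self (hr a ha).1.le))
  haveI := hucount.to_subtype
  have hdisj' : Pairwise (Function.onFun Disjoint fun b : u => ball (b : EuclideanSpace ℝ (Fin n)) (r b)) := by
    intro b c hbc
    exact Disjoint.mono ball_subset_closedBall ball_subset_closedBall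
      (hdisj b.2 c.2 (Subtype.coe_injective.ne hbc))
  have hsum : ∑' b : u, (∫⁻ y in ball (b : EuclideanSpace ℝ (Fin n)) (r b), f y ∂volume) ≤ ∫⁻ y, f y ∂volume := by
    rw [← lintegral_sum_measure]
    have : (Measure.sum fun b : u => volume.restrict (ball (b : EuclideanSpace ℝ (Fin n)) (r b)))
        = volume.restrict (⋃ b : u, ball (b : EuclideanSpace ℝ (Fin n)) (r b)) :=
      (Measure.restrict_iUnion hdisj' fun b => measurableSet_ball).symm
    rw [this]
    exact lintegral_mono' Measure.restrict_le_self le_rfl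
  calc volume S ≤ volume (⋃ b ∈ u, closedBall b (4 * r b)) := measure_mono hScov
    _ ≤ ∑' b : u, volume (closedBall (b : EuclideanSpace ℝ (Fin n)) (4 * r b)) := measure_biUnion_le _ hucount _
    _ = ∑' b : u, ENNReal.ofReal (4 ^ n) * volume (ball (b : EuclideanSpace ℝ (Fin n)) (r b)) := by
        refine tsum_congr fun b => ?_
        have hrb := hrpos b b.2
        rw [Measure.addHaar_closedBall _ _ (by positivity),
          Measure.addHaar_ball_of_pos _ _ hrb, finrank_euclideanSpace_fin,
          mul_pow, ENNReal.ofReal_mul (by positivity), mul_assoc]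
    _ = ENNReal.ofReal (4 ^ n) * ∑' b : u, volume (ball (b : EuclideanSpace ℝ (Fin n)) (r b)) := ENNReal.tsum_mul_left
    _ ≤ ENNReal.ofReal (4 ^ n) *
          ∑' b : u, (∫⁻ y in ball (b : EuclideanSpace ℝ (Fin n)) (r b), f y ∂volume) / t := by
        gcongr with b
        exact ENNReal.le_div_iff_mul_le (Or.inl ht0) (Or.inl httop) |>.2
          (by rw [mul_comm]; exact (hr b (huS b.2)).2.2)
    _ = ENNReal.ofReal (4 ^ n) *
          ((∑' b : u, ∫⁻ y in ball (b : EuclideanSpace ℝ (Fin n)) (r b), f y ∂volume) / t) := by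
        simp only [div_eq_mul_inv, ENNReal.tsum_mul_right]
    _ ≤ ENNReal.ofReal (4 ^ n) * ((∫⁻ y, f y ∂volume) / t) := by gcongr
    _ = ENNReal.ofReal (4 ^ n) * (∫⁻ y, f y ∂volume) / t := by rw [mul_div_assoc]

/-- Level-set estimate (Lemma 3.2 of the paper, in abstract form): if `h, k ≥ 0` are
integrable, supported a.e. in a bounded set `Ω` of diameter `D₀`, with
`∫_Ω h ≤ C₀ ∫_Ω k` and `M_α k (z₁) ≤ λ₁` at some `z₁ ∈ Ω`, then for every `R > 0`
there is `C > 0` (depending only on `n, α, C₀, D₀/R`) with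
`L^n({M_α h > λ₂} ∩ Ω) ≤ C (λ₁/λ₂)^{n/(n-α)} L^n(B_R(0))` for all `λ₂ > 0`. -/
theorem levelset_fracMax_global (n : ℕ) (hn : 2 ≤ n) (α : ℝ) (hα0 : 0 ≤ α) (hα : α < n)
    (Ω : Set (EuclideanSpace ℝ (Fin n))) (hΩmeas : MeasurableSet Ω)
    (hΩb : Bornology.IsBounded Ω) (D₀ : ℝ) (hD₀ : 0 < D₀) (hdiam : Metric.diam Ω = D₀)
    (h k : EuclideanSpace ℝ (Fin n) → ℝ) (hh0 : ∀ x, 0 ≤ h x) (hk0 : ∀ x, 0 ≤ k x)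
    (hhint : MeasureTheory.Integrable h volume) (hkint : MeasureTheory.Integrable k volume)
    (hhsupp : ∀ᵐ x ∂volume, x ∉ Ω → h x = 0) (hksupp : ∀ᵐ x ∂volume, x ∉ Ω → k x = 0)
    (C₀ : ℝ) (hC₀ : 0 < C₀) (hhk : ∫ x in Ω, h x ≤ C₀ * ∫ x in Ω, k x)
    (lam₁ : ℝ) (hlam₁ : 0 < lam₁)
    (z₁ : EuclideanSpace ℝ (Fin n)) (hz₁ : z₁ ∈ Ω)
    (hz₁M : fracMax n α k z₁ ≤ ENNReal.ofReal lam₁) :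
    ∀ R : ℝ, 0 < R → ∃ C : ℝ, 0 < C ∧
      ∀ lam₂ : ℝ, 0 < lam₂ →
        volume {ζ ∈ Ω | ENNReal.ofReal lam₂ < fracMax n α h ζ}
          ≤ ENNReal.ofReal (C * (lam₁ / lam₂) ^ ((n : ℝ) / ((n : ℝ) - α)))
              * volume (Metric.ball (0 : EuclideanSpace ℝ (Fin n)) R) := by
  intro R hR
  have hnα : 0 < (n : ℝ) - α := by linarith
  have h2D : (0:ℝ) < 2 * D₀ := by linarith
  set V := volume (ball (0 : EuclideanSpace ℝ (Fin n)) 1) with hVdef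
  have hV0 : V ≠ 0 := (measure_ball_pos _ _ one_pos).ne'
  have hVtop : V ≠ ⊤ := measure_ball_lt_top.ne
  set B := C₀ * (2*D₀) ^ ((n:ℝ) - α) with hBdef
  have hBpos : 0 < B := by positivity
  set A₁ := B * lam₁ with hA₁def
  have hA₁pos : 0 < A₁ := by positivity
  have habsk : ∀ y, |k y| = k y := fun y => abs_of_nonneg (hk0 y)
  have habsh : ∀ y, |h y| = h y := fun y => abs_of_nonneg (hh0 y)
  have hΩball : Ω ⊆ ball z₁ (2*D₀) := by
    intro x hx
    have hd := Metric.dist_le_diam_of_mem hΩb hx hz₁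
    rw [hdiam] at hd
    rw [mem_ball]; linarith
  -- Step 1: bound the total mass of h
  have hkball : ∫⁻ x in ball z₁ (2*D₀), ENNReal.ofReal (k x) ∂volume
      ≤ ENNReal.ofReal (lam₁ / (2*D₀)^α) * volume (ball z₁ (2*D₀)) := by
    have h1 : ENNReal.ofReal ((2*D₀) ^ α) *
        ⨍⁻ y in ball z₁ (2*D₀), ENNReal.ofReal |k y| ∂volume ≤ ENNReal.ofReal lam₁ := by
      refine le_trans ?_ hz₁M
      rw [fracMax]
      exact le_iSup₂ (f := fun (ρ : ℝ) (_ : 0 < ρ) =>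
        ENNReal.ofReal (ρ ^ α) * ⨍⁻ y in ball z₁ ρ, ENNReal.ofReal |k y| ∂volume) (2*D₀) h2D
    simp only [habsk] at h1
    rw [setLAverage_eq] at h1
    set m := volume (ball z₁ (2*D₀)) with hmdef
    have hm0 : m ≠ 0 := (measure_ball_pos _ _ h2D).ne'
    have hmtop : m ≠ ⊤ := measure_ball_lt_top.ne
    have haα : ENNReal.ofReal ((2*D₀) ^ α) ≠ 0 :=
      (ENNReal.ofReal_pos.2 (Real.rpow_pos_of_pos h2D α)).ne'
    calc ∫⁻ x in ball z₁ (2*D₀), ENNReal.ofReal (k x) ∂volume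
        = ((∫⁻ x in ball z₁ (2*D₀), ENNReal.ofReal (k x) ∂volume) / m) * m :=
          (ENNReal.div_mul_cancel hm0 hmtop).symm
      _ ≤ (ENNReal.ofReal lam₁ / ENNReal.ofReal ((2*D₀) ^ α)) * m := by
          refine mul_le_mul_left ?_ m
          rw [ENNReal.le_div_iff_mul_le (Or.inl haα) (Or.inl ENNReal.ofReal_ne_top), mul_comm]
          exact h1
      _ = ENNReal.ofReal (lam₁ / (2*D₀)^α) * m := by
          rw [ENNReal.ofReal_div_of_pos (Real.rpow_pos_of_pos h2D α)]
  have hkres : ∫⁻ x, ENNReal.ofReal (k x) ∂volume = ∫⁻ x in Ω, ENNReal.ofReal (k x) ∂volume := by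
    rw [← lintegral_add_compl (fun x => ENNReal.ofReal (k x)) hΩmeas]
    have h0 : (fun x => ENNReal.ofReal (k x)) =ᵐ[volume.restrict Ωᶜ] 0 := by
      rw [Filter.EventuallyEq, ae_restrict_iff' hΩmeas.compl]
      filter_upwards [hksupp] with x hx hxc
      simp [hx hxc]
    rw [lintegral_congr_ae h0]
    simp
  have hIbound : ∫⁻ x, ENNReal.ofReal (h x) ∂volume ≤ ENNReal.ofReal A₁ * V := by
    have e0 : (2*D₀) ^ (n:ℕ) = (2*D₀) ^ ((n:ℝ)) := (Real.rpow_natCast _ n).symm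
    calc ∫⁻ x, ENNReal.ofReal (h x) ∂volume
        = ENNReal.ofReal (∫ x, h x) :=
          (ofReal_integral_eq_lintegral_ofReal hhint (ae_of_all _ hh0)).symm
      _ ≤ ENNReal.ofReal (C₀ * ∫ x in Ω, k x) := by
          apply ENNReal.ofReal_le_ofReal
          rw [← setIntegral_eq_integral_of_ae_compl_eq_zero hhsupp]; exact hhk
      _ = ENNReal.ofReal C₀ * ENNReal.ofReal (∫ x, k x) := by
          rw [setIntegral_eq_integral_of_ae_compl_eq_zero hksupp, ENNReal.ofReal_mul hC₀.le]
      _ = ENNReal.ofReal C₀ * ∫⁻ x, ENNReal.ofReal (k x) ∂volume := by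
          rw [ofReal_integral_eq_lintegral_ofReal hkint (ae_of_all _ hk0)]
      _ = ENNReal.ofReal C₀ * ∫⁻ x in Ω, ENNReal.ofReal (k x) ∂volume := by rw [hkres]
      _ ≤ ENNReal.ofReal C₀ * ∫⁻ x in ball z₁ (2*D₀), ENNReal.ofReal (k x) ∂volume := by
          gcongr
      _ ≤ ENNReal.ofReal C₀ * (ENNReal.ofReal (lam₁ / (2*D₀)^α) * volume (ball z₁ (2*D₀))) := by
          gcongr
      _ = ENNReal.ofReal A₁ * V := by
          rw [Measure.addHaar_ball_of_pos _ _ h2D, finrank_euclideanSpace_fin, ← mul_assoc,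
            ← mul_assoc, ← ENNReal.ofReal_mul hC₀.le, ← ENNReal.ofReal_mul (by positivity)]
          congr 2
          rw [e0, hA₁def, hBdef, Real.rpow_sub h2D]
          ring
  -- Step 2
  refine ⟨4^n * B ^ ((n:ℝ)/((n:ℝ)-α)) / R^n, by positivity, ?_⟩
  intro lam₂ hlam₂
  set S := {ζ ∈ Ω | ENNReal.ofReal lam₂ < fracMax n α h ζ} with hSdef
  set r₀ := (A₁/lam₂) ^ (1/((n:ℝ)-α)) with hr₀def
  have hr₀pos : 0 < r₀ := Real.rpow_pos_of_pos (by positivity) _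
  set t := ENNReal.ofReal (lam₂ / r₀^α) with htdef
  have ht0 : t ≠ 0 := (ENNReal.ofReal_pos.2 (by positivity)).ne'
  have httop : t ≠ ⊤ := ENNReal.ofReal_ne_top
  have hkey : ∀ ζ ∈ S, ∃ ρ : ℝ, 0 < ρ ∧ ρ ≤ r₀ ∧
      t * volume (ball ζ ρ) ≤ ∫⁻ y in ball ζ ρ, ENNReal.ofReal (h y) ∂volume := by
    rintro ζ ⟨hζΩ, hζM⟩
    rw [fracMax] at hζM
    simp only [lt_iSup_iff] at hζM
    obtain ⟨ρ, hρ, hlt⟩ := hζM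
    simp only [habsh] at hlt
    rw [setLAverage_eq] at hlt
    set m := volume (ball ζ ρ) with hmdef
    set x := ∫⁻ y in ball ζ ρ, ENNReal.ofReal (h y) ∂volume with hxdef
    have hm0 : m ≠ 0 := (measure_ball_pos _ _ hρ).ne'
    have hmtop : m ≠ ⊤ := measure_ball_lt_top.ne
    have hmball : m = ENNReal.ofReal (ρ ^ (n:ℕ)) * V := by
      rw [hmdef, Measure.addHaar_ball_of_pos _ _ hρ, finrank_euclideanSpace_fin, hVdef]
    have hKEY : ENNReal.ofReal lam₂ * m ≤ ENNReal.ofReal (ρ ^ α) * x := by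
      calc ENNReal.ofReal lam₂ * m
          ≤ (ENNReal.ofReal (ρ ^ α) * (x / m)) * m := mul_le_mul_left hlt.le m
        _ = ENNReal.ofReal (ρ ^ α) * (x / m * m) := mul_assoc _ _ _
        _ = ENNReal.ofReal (ρ ^ α) * x := by rw [ENNReal.div_mul_cancel hm0 hmtop]
    have hρr₀ : ρ ≤ r₀ := by
      have hx : x ≤ ENNReal.ofReal A₁ * V :=
        le_trans (lintegral_mono' Measure.restrict_le_self le_rfl) hIbound
      have h2 : ENNReal.ofReal (lam₂ * ρ ^ (n:ℕ)) * V ≤ ENNReal.ofReal (ρ ^ α * A₁) * V := by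
        rw [ENNReal.ofReal_mul hlam₂.le, ENNReal.ofReal_mul (Real.rpow_pos_of_pos hρ α).le,
          mul_assoc, mul_assoc]
        refine le_trans ?_ (mul_le_mul_right hx _)
        rw [← hmball]
        exact hKEY
      have h3 : lam₂ * ρ ^ (n:ℕ) ≤ ρ ^ α * A₁ := by
        have := (ENNReal.mul_le_mul_iff_left hV0 hVtop).1 h2
        exact (ENNReal.ofReal_le_ofReal_iff (by positivity)).1 this
      have h4 : ρ ^ ((n:ℝ) - α) ≤ A₁ / lam₂ := by
        rw [Real.rpow_sub hρ, div_le_div_iff₀ (Real.rpow_pos_of_pos hρ α) hlam₂,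
          Real.rpow_natCast]
        nlinarith [h3]
      calc ρ = (ρ ^ ((n:ℝ) - α)) ^ (1/((n:ℝ) - α)) := by
            rw [← Real.rpow_mul hρ.le, mul_one_div, div_self hnα.ne', Real.rpow_one]
        _ ≤ r₀ := by
            rw [hr₀def]
            exact Real.rpow_le_rpow (Real.rpow_nonneg hρ.le _) h4 (by positivity)
    refine ⟨ρ, hρ, hρr₀, ?_⟩
    have h5 : ENNReal.ofReal (lam₂ / ρ ^ α) * m ≤ x := by
      rw [ENNReal.ofReal_div_of_pos (Real.rpow_pos_of_pos hρ α), div_eq_mul_inv,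
        mul_right_comm, ← div_eq_mul_inv,
        ENNReal.div_le_iff_le_mul
          (Or.inl (ENNReal.ofReal_pos.2 (Real.rpow_pos_of_pos hρ α)).ne')
          (Or.inl ENNReal.ofReal_ne_top), mul_comm x]
      exact hKEY
    refine le_trans (mul_le_mul_left ?_ m) h5
    rw [htdef]
    apply ENNReal.ofReal_le_ofReal
    exact div_le_div_of_nonneg_left hlam₂.le (Real.rpow_pos_of_pos hρ α)
      (Real.rpow_le_rpow hρ.le hρr₀ hα0)
  have hmain := weak_covering_est (fun y => ENNReal.ofReal (h y)) S r₀ t ht0 httop hkey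
  have hq : (0:ℝ) < lam₁ / lam₂ := by positivity
  set β := (n:ℝ)/((n:ℝ)-α) with hβdef
  have hreal : 4^n * A₁ * (r₀^α / lam₂) = (4^n * B^β) * (lam₁/lam₂)^β := by
    have e1 : r₀ ^ α = (A₁/lam₂) ^ (α/((n:ℝ)-α)) := by
      rw [hr₀def, ← Real.rpow_mul (by positivity), one_div, inv_mul_eq_div]
    have e2 : A₁ * (r₀^α/lam₂) = (A₁/lam₂) ^ (1 + α/((n:ℝ)-α)) := by
      rw [e1, Real.rpow_add (by positivity), Real.rpow_one]; ring
    have e3 : 1 + α/((n:ℝ)-α) = β := by rw [hβdef]; field_simp; ring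
    have e4 : (A₁/lam₂ : ℝ) = B * (lam₁/lam₂) := by rw [hA₁def]; ring
    rw [mul_assoc, e2, e3, e4, Real.mul_rpow hBpos.le hq.le]; ring
  calc volume S
      ≤ ENNReal.ofReal (4^n) * (∫⁻ y, ENNReal.ofReal (h y) ∂volume) / t := hmain
    _ ≤ ENNReal.ofReal (4^n) * (ENNReal.ofReal A₁ * V) / t := by gcongr
    _ = ENNReal.ofReal (4^n) * ENNReal.ofReal A₁ * V * ENNReal.ofReal (r₀^α/lam₂) := by
        rw [div_eq_mul_inv, htdef, ← ENNReal.ofReal_inv_of_pos (by positivity), inv_div,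
          ← mul_assoc]
    _ = ENNReal.ofReal (4^n * A₁ * (r₀^α/lam₂)) * V := by
        rw [mul_right_comm, ← ENNReal.ofReal_mul (by positivity),
          ← ENNReal.ofReal_mul (by positivity)]
    _ = ENNReal.ofReal ((4^n * B^β) * (lam₁/lam₂)^β) * V := by rw [hreal]
    _ = ENNReal.ofReal ((4^n * B^β/R^n) * (lam₁/lam₂)^β)
          * volume (ball (0 : EuclideanSpace ℝ (Fin n)) R) := by
        rw [Measure.addHaar_ball_of_pos _ _ hR, finrank_euclideanSpace_fin, ← hVdef, ← mul_assoc,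
          ← ENNReal.ofReal_mul (by positivity)]
        congr 2
        field_simp
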